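/- Let b ∈ L²(Ω;ℝⁿ) satisfy |b(x)| ≤ a(x) for a.e. x ∈ Ω, and let p ∈ L²(Ω;ℝⁿ) be such that for every d ∈ L²(Ω;ℝⁿ) with |d(x)| ≤ a(x) a.e. one has −⟨g,d⟩ + ⟨g,b⟩ ≥ ⟨p, d − b⟩. Then there exists a measurable function m : Ω → [0,∞) with m(x) = 0 for a.e. x such that |b(x)| < a(x), and such that p(x) + g(x) = m(x) b(x) for a.e. x with a(x) > 0. -/

import Mathlib

open MeasureTheory RealInnerProductSpace

lemma memLp_integrable_inner {α : Type*} [MeasurableSpace α] {μ : Measure α}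
    {E : Type*} [NormedAddCommGroup E] [InnerProductSpace ℝ E]
    {f g : α → E} (hf : MemLp f 2 μ) (hg : MemLp g 2 μ) :
    Integrable (fun x => ⟪f x, g x⟫) μ := by
  have h := L2.integrable_inner (𝕜 := ℝ) (hf.toLp f) (hg.toLp g)
  apply h.congr
  filter_upwards [hf.coeFn_toLp, hg.coeFn_toLp] with x h1 h2
  rw [h1, h2]

/-- If `|b(x)| ≤ a(x)` a.e. and `p ∈ L²(Ω;ℝⁿ)` is a subgradient of `F*`
at `b` (i.e. `-⟨g,d⟩ + ⟨g,b⟩ ≥ ⟨p, d - b⟩` for all feasible `d`), then there is a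
measurable `m : Ω → [0,∞)` vanishing a.e. on `{|b| < a}` such that
`p + g = m·b` a.e. on `{a > 0}`. -/
theorem stmt_3 {n : ℕ} (hn : 2 ≤ n) (Ω : Set (EuclideanSpace ℝ (Fin n)))
    (hΩopen : IsOpen Ω) (hΩbdd : Bornology.IsBounded Ω)
    (μ : Measure (EuclideanSpace ℝ (Fin n))) (hμ : μ = volume.restrict Ω)
    (a : EuclideanSpace ℝ (Fin n) → ℝ) (ha2 : MemLp a 2 μ) (ha0 : ∀ᵐ x ∂μ, 0 ≤ a x)
    (g : EuclideanSpace ℝ (Fin n) → EuclideanSpace ℝ (Fin n)) (hg : MemLp g 2 μ)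
    (b : EuclideanSpace ℝ (Fin n) → EuclideanSpace ℝ (Fin n)) (hb : MemLp b 2 μ)
    (hba : ∀ᵐ x ∂μ, ‖b x‖ ≤ a x)
    (p : EuclideanSpace ℝ (Fin n) → EuclideanSpace ℝ (Fin n)) (hp : MemLp p 2 μ)
    (hsub : ∀ d : EuclideanSpace ℝ (Fin n) → EuclideanSpace ℝ (Fin n),
      MemLp d 2 μ → (∀ᵐ x ∂μ, ‖d x‖ ≤ a x) →
      (∫ x, ⟪p x, d x - b x⟫ ∂μ) ≤
        -(∫ x, ⟪g x, d x⟫ ∂μ) + ∫ x, ⟪g x, b x⟫ ∂μ) :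
    ∃ m : EuclideanSpace ℝ (Fin n) → ℝ,
      Measurable m ∧ (∀ x, 0 ≤ m x) ∧
      (∀ᵐ x ∂μ, ‖b x‖ < a x → m x = 0) ∧
      (∀ᵐ x ∂μ, 0 < a x → p x + g x = m x • b x) := by
  set q : EuclideanSpace ℝ (Fin n) → EuclideanSpace ℝ (Fin n) := fun x => p x + g x with hqdef
  have hq : MemLp q 2 μ := hp.add hg
  -- measurable representatives
  set q' := hq.1.mk q with hq'def
  have hq'm : StronglyMeasurable q' := hq.1.stronglyMeasurable_mk
  have hq'ae : q =ᵐ[μ] q' := hq.1.ae_eq_mk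
  set a' := ha2.1.mk a with ha'def
  have ha'm : StronglyMeasurable a' := ha2.1.stronglyMeasurable_mk
  have ha'ae : a =ᵐ[μ] a' := ha2.1.ae_eq_mk
  -- test field
  set d : EuclideanSpace ℝ (Fin n) → EuclideanSpace ℝ (Fin n) :=
    fun x => (a' x / ‖q' x‖) • q' x with hddef
  have hdnorm : ∀ x, ‖d x‖ ≤ |a' x| := by
    intro x
    rcases eq_or_ne (q' x) 0 with h | h
    · simp [hddef, h, abs_nonneg]
    · have hq0 : ‖q' x‖ ≠ 0 := norm_ne_zero_iff.mpr h
      simp only [hddef, norm_smul, Real.norm_eq_abs, abs_div, abs_norm]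
      rw [div_mul_cancel₀ _ hq0]
  have hdm : StronglyMeasurable d := by
    exact StronglyMeasurable.smul
      ((ha'm.measurable.div hq'm.measurable.norm).stronglyMeasurable) hq'm
  have hd2 : MemLp d 2 μ := by
    have ha'2 : MemLp a' 2 μ := ha2.ae_eq ha'ae
    refine MemLp.of_le ha'2 hdm.aestronglyMeasurable ?_
    filter_upwards with x
    simpa using hdnorm x
  have hdle : ∀ᵐ x ∂μ, ‖d x‖ ≤ a x := by
    filter_upwards [ha0, ha'ae] with x h0 he
    calc ‖d x‖ ≤ |a' x| := hdnorm x
    _ = a x := by rw [← he, abs_of_nonneg h0]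
  -- inner products with d
  have hinnerd : ∀ x, ⟪q' x, d x⟫ = a' x * ‖q' x‖ := by
    intro x
    rcases eq_or_ne (q' x) 0 with h | h
    · simp [hddef, h]
    · have hq0 : ‖q' x‖ ≠ 0 := norm_ne_zero_iff.mpr h
      rw [hddef, real_inner_smul_right, real_inner_self_eq_norm_sq]
      field_simp
  -- integrabilities
  have ipd := memLp_integrable_inner hp hd2
  have ipb := memLp_integrable_inner hp hb
  have igd := memLp_integrable_inner hg hd2
  have igb := memLp_integrable_inner hg hb
  have iqd := memLp_integrable_inner hq hd2
  have iqb := memLp_integrable_inner hq hb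
  -- key inequality: ∫ ⟪q, d - b⟫ ≤ 0
  have hkey := hsub d hd2 hdle
  have hsplit : ∀ (f : EuclideanSpace ℝ (Fin n) → EuclideanSpace ℝ (Fin n)),
      MemLp f 2 μ → (∫ x, ⟪f x, d x - b x⟫ ∂μ) =
        (∫ x, ⟪f x, d x⟫ ∂μ) - ∫ x, ⟪f x, b x⟫ ∂μ := by
    intro f hf
    rw [← integral_sub (memLp_integrable_inner hf hd2) (memLp_integrable_inner hf hb)]
    congr 1; ext x; rw [inner_sub_right]
  have hq_int : (∫ x, ⟪q x, d x - b x⟫ ∂μ) ≤ 0 := by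
    have hadd : ∀ (f : EuclideanSpace ℝ (Fin n) → EuclideanSpace ℝ (Fin n)),
        MemLp f 2 μ → (∫ x, ⟪q x, f x⟫ ∂μ) = (∫ x, ⟪p x, f x⟫ ∂μ) + ∫ x, ⟪g x, f x⟫ ∂μ := by
      intro f hf
      rw [← integral_add (memLp_integrable_inner hp hf) (memLp_integrable_inner hg hf)]
      congr 1; ext x
      simp only [hqdef]
      rw [inner_add_left]
    have e1 : (∫ x, ⟪q x, d x - b x⟫ ∂μ)
        = (∫ x, ⟪p x, d x - b x⟫ ∂μ) + ((∫ x, ⟪g x, d x⟫ ∂μ) - ∫ x, ⟪g x, b x⟫ ∂μ) := by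
      rw [hsplit q hq, hsplit p hp, hadd d hd2, hadd b hb]
      ring
    rw [e1]
    linarith [hkey]
  -- the nonneg function h := a‖q‖ - ⟪q,b⟫ has nonpositive integral
  have hae_eq : (fun x => ⟪q x, d x - b x⟫) =ᵐ[μ] fun x => a x * ‖q x‖ - ⟪q x, b x⟫ := by
    filter_upwards [hq'ae, ha'ae] with x hqe hae
    rw [inner_sub_right, hqe, hinnerd x, ← hqe, ← hae]
  have hnonneg : ∀ᵐ x ∂μ, 0 ≤ a x * ‖q x‖ - ⟪q x, b x⟫ := by
    filter_upwards [hba] with x hx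
    have h1 : ⟪q x, b x⟫ ≤ ‖q x‖ * ‖b x‖ := real_inner_le_norm _ _
    have h2 : ‖q x‖ * ‖b x‖ ≤ a x * ‖q x‖ := by
      rw [mul_comm]
      exact mul_le_mul_of_nonneg_right hx (norm_nonneg _)
    linarith
  have iqdb : Integrable (fun x => ⟪q x, d x - b x⟫) μ :=
    (iqd.sub iqb).congr (Filter.Eventually.of_forall fun x => (inner_sub_right _ _ _).symm)
  have hint : Integrable (fun x => a x * ‖q x‖ - ⟪q x, b x⟫) μ := iqdb.congr hae_eq
  have hzero : (fun x => a x * ‖q x‖ - ⟪q x, b x⟫) =ᵐ[μ] 0 := by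
    have hle : (∫ x, (a x * ‖q x‖ - ⟪q x, b x⟫) ∂μ) ≤ 0 := by
      rw [← integral_congr_ae hae_eq]; exact hq_int
    have hge : 0 ≤ ∫ x, (a x * ‖q x‖ - ⟪q x, b x⟫) ∂μ := integral_nonneg_of_ae hnonneg
    have : (∫ x, (a x * ‖q x‖ - ⟪q x, b x⟫) ∂μ) = 0 := le_antisymm hle hge
    exact (integral_eq_zero_iff_of_nonneg_ae hnonneg hint).mp this
  -- define m
  refine ⟨fun x => if 0 < a' x then ‖q' x‖ / a' x else 0, ?_, ?_, ?_, ?_⟩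
  · exact Measurable.ite (measurableSet_lt measurable_const ha'm.measurable)
      (hq'm.measurable.norm.div ha'm.measurable) measurable_const
  · intro x
    dsimp only
    split_ifs with h
    · exact div_nonneg (norm_nonneg _) h.le
    · exact le_refl 0
  · filter_upwards [hzero, ha'ae, hq'ae] with x h0 hae hqe hlt
    have haq : a x * ‖q x‖ = ⟪q x, b x⟫ := by
      have := sub_eq_zero.mp h0; linarith [this]
    have hcs : ⟪q x, b x⟫ ≤ ‖q x‖ * ‖b x‖ := real_inner_le_norm _ _
    have hq0 : ‖q x‖ = 0 := by
      by_contra hne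
      have hpos : 0 < ‖q x‖ := lt_of_le_of_ne (norm_nonneg _) (Ne.symm hne)
      nlinarith
    have : ‖q' x‖ = 0 := by rw [← hqe]; exact hq0
    simp [this]
  · filter_upwards [hzero, ha'ae, hq'ae, hba] with x h0 hae hqe hbax hpos
    have haq : a x * ‖q x‖ = ⟪q x, b x⟫ := by
      have := sub_eq_zero.mp h0; linarith [this]
    have hpos' : 0 < a' x := hae ▸ hpos
    rw [if_pos hpos']
    rcases eq_or_ne (q x) 0 with hq0 | hq0
    · have : ‖q' x‖ = 0 := by rw [← hqe, hq0, norm_zero]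
      show q x = _
      rw [hq0, this]
      simp
    · -- q x ≠ 0 case: ‖b x‖ = a x and Cauchy-Schwarz equality
      have hqn : 0 < ‖q x‖ := norm_pos_iff.mpr hq0
      have hcs : ⟪q x, b x⟫ ≤ ‖q x‖ * ‖b x‖ := real_inner_le_norm _ _
      have hmc : ‖q x‖ * ‖b x‖ = ‖b x‖ * ‖q x‖ := mul_comm _ _
      have hba_eq : ‖b x‖ = a x := by
        refine le_antisymm hbax (le_of_mul_le_mul_right ?_ hqn)
        linarith
      have heq : ⟪q x, b x⟫ = ‖q x‖ * ‖b x‖ := by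
        have h4 : ‖b x‖ * ‖q x‖ = a x * ‖q x‖ := by rw [hba_eq]
        linarith
      have hpar : ‖b x‖ • q x = ‖q x‖ • b x := inner_eq_norm_mul_iff_real.mp heq
      show q x = (‖q' x‖ / a' x) • b x
      rw [← hqe, ← hae, ← hba_eq]
      have hbn : ‖b x‖ ≠ 0 := by rw [hba_eq]; exact hpos.ne'
      have h3 : (‖q x‖ / ‖b x‖) • b x = q x := by
        rw [div_eq_inv_mul, mul_smul, ← hpar, smul_smul, inv_mul_cancel₀ hbn, one_smul]
      exact h3.symm
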